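/- For every prime p and integer u ≥ 0, the constants α_{p,u,r} satisfy ∑_{r=0}^∞ α_{p,u,r} = 1. -/

import Mathlib

/-- The Cohen–Lenstra constant
`α_{p,u,r} = (∏_{i=r+1}^∞ (1 − p^{−i})) / (p^{r(u+r)} ∏_{i=1}^{r+u} (1 − p^{−i}))`. -/
noncomputable def cohenLenstraAlpha (p u r : ℕ) : ℝ :=
  (∏' i : ℕ, (1 - ((p : ℝ))⁻¹ ^ (r + 1 + i))) /
    ((p : ℝ) ^ (r * (u + r)) * ∏ i ∈ Finset.range (r + u), (1 - ((p : ℝ))⁻¹ ^ (i + 1)))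

namespace CLAux

open Finset Filter Topology

/-- finite q-Pochhammer `(x;x)_n` -/
noncomputable def Qp (x : ℝ) (n : ℕ) : ℝ := ∏ i ∈ Finset.range n, (1 - x ^ (i + 1))

variable {x : ℝ}

lemma factor_pos (hx0 : 0 < x) (hx1 : x < 1) (k : ℕ) : 0 < 1 - x ^ (k + 1) := by
  have h : x ^ (k + 1) < 1 := pow_lt_one₀ hx0.le hx1 (by omega)
  linarith

lemma Qp_pos (hx0 : 0 < x) (hx1 : x < 1) (n : ℕ) : 0 < Qp x n :=
  Finset.prod_pos fun i _ => factor_pos hx0 hx1 i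

lemma Qp_zero : Qp x 0 = 1 := by simp [Qp]

lemma Qp_succ (n : ℕ) : Qp x (n + 1) = Qp x n * (1 - x ^ (n + 1)) :=
  Finset.prod_range_succ _ _

lemma Qp_le_one (hx0 : 0 < x) (hx1 : x < 1) (n : ℕ) : Qp x n ≤ 1 :=
  Finset.prod_le_one (fun i _ => (factor_pos hx0 hx1 i).le)
    (fun i _ => by have := pow_pos hx0 (i + 1); linarith)

lemma Qp_add (r n : ℕ) :
    Qp x (r + n) = Qp x r * ∏ i ∈ Finset.range n, (1 - x ^ (r + 1 + i)) := by
  rw [Qp, Finset.prod_range_add]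
  congr 1
  exact Finset.prod_congr rfl fun i _ => by rw [show r + i + 1 = r + 1 + i by omega]

/-- Weierstrass product inequality. -/
lemma weier (f : ℕ → ℝ) (h0 : ∀ i, 0 ≤ f i) (h1 : ∀ i, f i ≤ 1) (n : ℕ) :
    1 - ∑ i ∈ Finset.range n, f i ≤ ∏ i ∈ Finset.range n, (1 - f i) := by
  induction n with
  | zero => simp
  | succ n ih =>
    rw [Finset.prod_range_succ, Finset.sum_range_succ]
    have hp : 0 ≤ ∏ i ∈ Finset.range n, (1 - f i) :=
      Finset.prod_nonneg fun i _ => by linarith [h1 i]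
    have hle : ∏ i ∈ Finset.range n, (1 - f i) ≤ 1 :=
      Finset.prod_le_one (fun i _ => by linarith [h1 i]) (fun i _ => by linarith [h0 i])
    nlinarith [h0 n, h1 n]

/-- a positive uniform lower bound for `Qp`. -/
noncomputable def cst (x : ℝ) : ℝ := (1 - x) * (1 - x ^ 2 / (1 - x))

lemma cst_pos (hx0 : 0 < x) (hx2 : x ≤ 1 / 2) : 0 < cst x := by
  have h1 : (0:ℝ) < 1 - x := by linarith
  have h2 : x ^ 2 / (1 - x) < 1 := by rw [div_lt_one h1]; nlinarith
  exact mul_pos h1 (by linarith)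

lemma cst_le_Qp (hx0 : 0 < x) (hx2 : x ≤ 1 / 2) (n : ℕ) : cst x ≤ Qp x n := by
  have hx1 : x < 1 := lt_of_le_of_lt hx2 (by norm_num)
  have h1 : (0:ℝ) < 1 - x := by linarith
  have hd0 : 0 ≤ x ^ 2 / (1 - x) := by positivity
  cases n with
  | zero =>
    rw [Qp_zero, cst]
    nlinarith
  | succ n =>
    have hstep : Qp x (n + 1) = (∏ i ∈ Finset.range n, (1 - x ^ (i + 1 + 1))) * (1 - x) := by
      rw [Qp, Finset.prod_range_succ']
      norm_num
    have hw : 1 - ∑ i ∈ Finset.range n, x ^ (i + 1 + 1) ≤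
        ∏ i ∈ Finset.range n, (1 - x ^ (i + 1 + 1)) := by
      have := weier (fun i => x ^ (i + 1 + 1))
        (fun i => by positivity) (fun i => pow_le_one₀ hx0.le hx1.le) n
      simpa using this
    have hsum : ∑ i ∈ Finset.range n, x ^ (i + 1 + 1) ≤ x ^ 2 / (1 - x) := by
      have hxsum : ∑ i ∈ Finset.range n, x ^ i ≤ (1 - x)⁻¹ := by
        have hs : Summable (fun i : ℕ => x ^ i) :=
          summable_geometric_of_lt_one hx0.le hx1
        calc ∑ i ∈ Finset.range n, x ^ i ≤ ∑' i : ℕ, x ^ i :=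
              Summable.sum_le_tsum _ (fun i _ => by positivity) hs
          _ = (1 - x)⁻¹ := tsum_geometric_of_lt_one hx0.le hx1
      calc ∑ i ∈ Finset.range n, x ^ (i + 1 + 1)
          = x ^ 2 * ∑ i ∈ Finset.range n, x ^ i := by
            rw [Finset.mul_sum]
            exact Finset.sum_congr rfl fun i _ => by ring
        _ ≤ x ^ 2 * (1 - x)⁻¹ := by
            apply mul_le_mul_of_nonneg_left hxsum (by positivity)
        _ = x ^ 2 / (1 - x) := by rw [div_eq_mul_inv]
    calc cst x = (1 - x ^ 2 / (1 - x)) * (1 - x) := by rw [cst]; ring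
      _ ≤ (∏ i ∈ Finset.range n, (1 - x ^ (i + 1 + 1))) * (1 - x) := by
          apply mul_le_mul_of_nonneg_right _ h1.le
          exact le_trans (by linarith) hw
      _ = Qp x (n + 1) := hstep.symm

/-- infinite products of factors in `[0,1]` converge (to the infimum of partial products). -/
lemma hasProd_of_le_one {f : ℕ → ℝ} (h0 : ∀ i, 0 ≤ f i) (h1 : ∀ i, f i ≤ 1) :
    HasProd f (⨅ n, ∏ i ∈ Finset.range n, f i) := by
  classical
  set P : ℕ → ℝ := fun n => ∏ i ∈ Finset.range n, f i with hP
  have hbdd : BddBelow (Set.range P) := by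
    refine ⟨0, ?_⟩
    rintro y ⟨n, rfl⟩
    exact Finset.prod_nonneg fun i _ => h0 i
  have key : ∀ s t : Finset ℕ, s ⊆ t → ∏ i ∈ t, f i ≤ ∏ i ∈ s, f i := by
    intro s t hst
    rw [← Finset.prod_sdiff hst]
    exact mul_le_of_le_one_left (Finset.prod_nonneg fun i _ => h0 i)
      (Finset.prod_le_one (fun i _ => h0 i) (fun i _ => h1 i))
  have hL_le : ∀ s : Finset ℕ, (⨅ n, P n) ≤ ∏ i ∈ s, f i := by
    intro s
    obtain ⟨n, hn⟩ := s.exists_nat_subset_range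
    exact le_trans (ciInf_le hbdd n) (key s (Finset.range n) hn)
  rw [HasProd]
  apply tendsto_order.2
  constructor
  · intro b hb
    exact Filter.Eventually.of_forall fun s => lt_of_lt_of_le hb (hL_le s)
  · intro b hb
    obtain ⟨n, hn⟩ := exists_lt_of_ciInf_lt hb
    filter_upwards [Filter.eventually_ge_atTop (Finset.range n)] with s hs
    exact lt_of_le_of_lt (key (Finset.range n) s hs) hn

noncomputable def Qinf (x : ℝ) : ℝ := ⨅ n, Qp x n

lemma Qp_antitone (hx0 : 0 < x) (hx1 : x < 1) : Antitone (Qp x) := by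
  apply antitone_nat_of_succ_le
  intro n
  rw [Qp_succ]
  exact mul_le_of_le_one_right (Qp_pos hx0 hx1 n).le
    (by have := pow_pos hx0 (n + 1); linarith)

lemma tendsto_Qp (hx0 : 0 < x) (hx1 : x < 1) :
    Tendsto (Qp x) atTop (𝓝 (Qinf x)) := by
  apply tendsto_atTop_ciInf (Qp_antitone hx0 hx1)
  exact ⟨0, by rintro y ⟨n, rfl⟩; exact (Qp_pos hx0 hx1 n).le⟩

lemma cst_le_Qinf (hx0 : 0 < x) (hx2 : x ≤ 1 / 2) : cst x ≤ Qinf x :=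
  le_ciInf fun n => cst_le_Qp hx0 hx2 n

lemma Qinf_pos (hx0 : 0 < x) (hx2 : x ≤ 1 / 2) : 0 < Qinf x :=
  lt_of_lt_of_le (cst_pos hx0 hx2) (cst_le_Qinf hx0 hx2)

lemma tprod_tail (hx0 : 0 < x) (hx1 : x < 1) (r : ℕ) :
    (∏' i : ℕ, (1 - x ^ (r + 1 + i))) = Qinf x / Qp x r := by
  have h0 : ∀ i : ℕ, (0:ℝ) ≤ 1 - x ^ (r + 1 + i) := fun i => by
    have := pow_le_one₀ hx0.le hx1.le (n := r + 1 + i); linarith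
  have h1 : ∀ i : ℕ, (1:ℝ) - x ^ (r + 1 + i) ≤ 1 := fun i => by
    have := pow_pos hx0 (r + 1 + i); linarith
  have hp := hasProd_of_le_one h0 h1
  have hmul : Multipliable (fun i : ℕ => 1 - x ^ (r + 1 + i)) := ⟨_, hp⟩
  have hQr := (Qp_pos hx0 hx1 r).ne'
  have ht1 : Tendsto (fun n => ∏ i ∈ Finset.range n, (1 - x ^ (r + 1 + i))) atTop
      (𝓝 (∏' i : ℕ, (1 - x ^ (r + 1 + i)))) := HasProd.tendsto_prod_nat hmul.hasProd
  have ht2 : Tendsto (fun n => ∏ i ∈ Finset.range n, (1 - x ^ (r + 1 + i))) atTop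
      (𝓝 (Qinf x / Qp x r)) := by
    have heq : ∀ n, ∏ i ∈ Finset.range n, (1 - x ^ (r + 1 + i)) = Qp x (r + n) / Qp x r := by
      intro n
      rw [Qp_add r n]
      field_simp
    have htQ : Tendsto (fun n => Qp x (r + n)) atTop (𝓝 (Qinf x)) := by
      have := (tendsto_Qp hx0 hx1).comp (tendsto_add_atTop_nat r)
      simpa [Function.comp_def, Nat.add_comm] using this
    exact Tendsto.congr (fun n => (heq n).symm) (htQ.div_const _)
  exact tendsto_nhds_unique ht1 ht2

/-- the summand of the Cohen–Lenstra sum, normalized by `Qinf`. -/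
noncomputable def aa (x : ℝ) (u r : ℕ) : ℝ := x ^ (r * (r + u)) / (Qp x r * Qp x (r + u))

noncomputable def SS (x : ℝ) (u : ℕ) : ℝ := ∑' r, aa x u r

lemma aa_nonneg (hx0 : 0 < x) (hx1 : x < 1) (u r : ℕ) : 0 ≤ aa x u r :=
  div_nonneg (by positivity) (mul_pos (Qp_pos hx0 hx1 r) (Qp_pos hx0 hx1 (r + u))).le

lemma aa_le (hx0 : 0 < x) (hx2 : x ≤ 1 / 2) (u r m : ℕ) (hm : m ≤ r * (r + u)) :
    aa x u r ≤ (cst x * cst x)⁻¹ * x ^ m := by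
  have hx1 : x < 1 := lt_of_le_of_lt hx2 (by norm_num)
  have hc := cst_pos hx0 hx2
  have h1 : x ^ (r * (r + u)) ≤ x ^ m := pow_le_pow_of_le_one hx0.le hx1.le hm
  have h2 : cst x * cst x ≤ Qp x r * Qp x (r + u) :=
    mul_le_mul (cst_le_Qp hx0 hx2 r) (cst_le_Qp hx0 hx2 (r + u)) hc.le
      (Qp_pos hx0 hx1 r).le
  rw [aa]
  calc x ^ (r * (r + u)) / (Qp x r * Qp x (r + u)) ≤ x ^ m / (cst x * cst x) :=
        div_le_div₀ (by positivity) h1 (by positivity) h2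
    _ = (cst x * cst x)⁻¹ * x ^ m := by rw [div_eq_mul_inv, mul_comm]

lemma le_mul_self (u r : ℕ) : r ≤ r * (r + u) := by
  rcases Nat.eq_zero_or_pos r with h | h
  · simp [h]
  · exact Nat.le_mul_of_pos_right r (by omega)

lemma summable_aa (hx0 : 0 < x) (hx2 : x ≤ 1 / 2) (u : ℕ) : Summable (aa x u) := by
  have hx1 : x < 1 := lt_of_le_of_lt hx2 (by norm_num)
  have hbound : ∀ r, aa x u r ≤ (cst x * cst x)⁻¹ * x ^ r := fun r =>
    aa_le hx0 hx2 u r r (le_mul_self u r)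
  have hs : Summable (fun r : ℕ => (cst x * cst x)⁻¹ * x ^ r) :=
    (summable_geometric_of_lt_one hx0.le hx1).mul_left _
  exact Summable.of_nonneg_of_le (aa_nonneg hx0 hx1 u) hbound hs

lemma SS_nonneg (hx0 : 0 < x) (hx1 : x < 1) (u : ℕ) : 0 ≤ SS x u :=
  tsum_nonneg (aa_nonneg hx0 hx1 u)

lemma SS_le (hx0 : 0 < x) (hx2 : x ≤ 1 / 2) (u : ℕ) :
    SS x u ≤ (cst x * cst x)⁻¹ * (1 - x)⁻¹ := by
  have hx1 : x < 1 := lt_of_le_of_lt hx2 (by norm_num)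
  have hbound : ∀ r, aa x u r ≤ (cst x * cst x)⁻¹ * x ^ r := fun r =>
    aa_le hx0 hx2 u r r (le_mul_self u r)
  have hs : Summable (fun r : ℕ => (cst x * cst x)⁻¹ * x ^ r) :=
    (summable_geometric_of_lt_one hx0.le hx1).mul_left _
  have h := Summable.tsum_le_tsum hbound (summable_aa hx0 hx2 u) hs
  calc SS x u ≤ ∑' r : ℕ, (cst x * cst x)⁻¹ * x ^ r := h
    _ = (cst x * cst x)⁻¹ * (1 - x)⁻¹ := by
        rw [tsum_mul_left, tsum_geometric_of_lt_one hx0.le hx1]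

noncomputable def AA (x : ℝ) (u : ℕ) : ℕ → ℝ
  | 0 => 0
  | (s + 1) => x ^ (u + 1) * aa x (u + 2) s

lemma key_identity (hx0 : 0 < x) (hx1 : x < 1) (u r : ℕ) :
    aa x u r - aa x (u + 1) r = AA x u r - x ^ (u + 1) * aa x (u + 1) r := by
  have hQ := Qp_pos hx0 hx1
  cases r with
  | zero =>
    simp only [AA, aa, Nat.zero_mul, pow_zero, Nat.zero_add, Qp_zero, one_mul]
    rw [Qp_succ u]
    have h1 := (hQ u).ne'
    have h2 := (factor_pos hx0 hx1 u).ne'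
    field_simp
    ring
  | succ s =>
    have hQs := (hQ s).ne'
    have hQt := (hQ (s + u + 1)).ne'
    have hw : (1 - x ^ (s + 1)) ≠ 0 := (factor_pos hx0 hx1 s).ne'
    have hv : (1 - x ^ (u + 1) * x ^ (s + 1)) ≠ 0 := by
      rw [← pow_add]
      rw [show u + 1 + (s + 1) = (s + u + 1) + 1 from by omega]
      exact (factor_pos hx0 hx1 (s + u + 1)).ne'
    simp only [AA, aa]
    rw [show (s + 1) * (s + 1 + u) = s * (s + u) + s + s + (u + 1) from by ring,
        show (s + 1) * (s + 1 + (u + 1)) = s * (s + u) + s + s + (u + 1) + (s + 1) from by ring,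
        show s * (s + (u + 2)) = s * (s + u) + s + s from by ring,
        show s + 1 + u = s + u + 1 from by omega,
        show s + 1 + (u + 1) = s + u + 1 + 1 from by omega,
        show s + (u + 2) = s + u + 1 + 1 from by omega,
        Qp_succ (s + u + 1), Qp_succ s,
        show s + u + 1 + 1 = (u + 1) + (s + 1) from by omega,
        pow_add x (s * (s + u) + s + s + (u + 1)) (s + 1),
        pow_add x (s * (s + u) + s + s) (u + 1),
        pow_add x (u + 1) (s + 1)]
    generalize x ^ (s * (s + u) + s + s) = a
    generalize hw1 : x ^ (s + 1) = w at hw hv ⊢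
    generalize hz1 : x ^ (u + 1) = z at hv ⊢
    field_simp
    ring

lemma summable_AA (hx0 : 0 < x) (hx2 : x ≤ 1 / 2) (u : ℕ) : Summable (AA x u) := by
  have h : Summable (fun s : ℕ => AA x u (s + 1)) := by
    simpa [AA] using ((summable_aa hx0 hx2 (u + 2)).mul_left (x ^ (u + 1)))
  exact (summable_nat_add_iff 1).mp h

lemma tsum_AA (hx0 : 0 < x) (hx2 : x ≤ 1 / 2) (u : ℕ) :
    ∑' r, AA x u r = x ^ (u + 1) * SS x (u + 2) := by
  rw [Summable.tsum_eq_zero_add (summable_AA hx0 hx2 u)]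
  simp only [AA, zero_add, tsum_mul_left]
  rfl

lemma step (hx0 : 0 < x) (hx2 : x ≤ 1 / 2) (u : ℕ) :
    SS x u - SS x (u + 1) = x ^ (u + 1) * SS x (u + 2) - x ^ (u + 1) * SS x (u + 1) := by
  have hx1 : x < 1 := lt_of_le_of_lt hx2 (by norm_num)
  have h1 : SS x u - SS x (u + 1) = ∑' r, (aa x u r - aa x (u + 1) r) :=
    (Summable.tsum_sub (summable_aa hx0 hx2 u) (summable_aa hx0 hx2 (u + 1))).symm
  rw [h1, tsum_congr (key_identity hx0 hx1 u),
      Summable.tsum_sub (summable_AA hx0 hx2 u) ((summable_aa hx0 hx2 (u + 1)).mul_left _),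
      tsum_AA hx0 hx2 u, tsum_mul_left]
  rfl

lemma SS_succ (hx0 : 0 < x) (hx2 : x ≤ 1 / 2) (u : ℕ) : SS x u = SS x (u + 1) := by
  have hx1 : x < 1 := lt_of_le_of_lt hx2 (by norm_num)
  set C : ℝ := (cst x * cst x)⁻¹ * (1 - x)⁻¹ with hC
  set D : ℕ → ℝ := fun v => SS x v - SS x (v + 1) with hD
  have hstep : ∀ v, D v = -(x ^ (v + 1) * D (v + 1)) := by
    intro v
    simp only [hD]
    rw [step hx0 hx2 v]
    ring
  have hDbound : ∀ v, |D v| ≤ 2 * C := by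
    intro v
    rw [abs_le]
    constructor
    · have := SS_le hx0 hx2 v
      have h2 := SS_le hx0 hx2 (v + 1)
      have h3 := SS_nonneg hx0 hx1 v
      have h4 := SS_nonneg hx0 hx1 (v + 1)
      simp only [hD]
      linarith
    · have := SS_le hx0 hx2 v
      have h4 := SS_nonneg hx0 hx1 (v + 1)
      have hC0 : 0 ≤ C := le_trans (SS_nonneg hx0 hx1 v) (SS_le hx0 hx2 v)
      simp only [hD]
      linarith
  have hiter : ∀ n v, |D v| ≤ x ^ n * (2 * C) := by
    intro n
    induction n with
    | zero => intro v; simpa using hDbound v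
    | succ n ih =>
      intro v
      have h1 : |D v| = x ^ (v + 1) * |D (v + 1)| := by
        rw [hstep v, abs_neg, abs_mul, abs_of_nonneg (by positivity)]
      have h2 : x ^ (v + 1) ≤ x := by
        calc x ^ (v + 1) ≤ x ^ 1 := pow_le_pow_of_le_one hx0.le hx1.le (by omega)
          _ = x := pow_one x
      calc |D v| = x ^ (v + 1) * |D (v + 1)| := h1
        _ ≤ x * (x ^ n * (2 * C)) := by
            apply mul_le_mul h2 (ih (v + 1)) (abs_nonneg _) hx0.le
        _ = x ^ (n + 1) * (2 * C) := by ring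
  have hlim : Tendsto (fun n : ℕ => x ^ n * (2 * C)) atTop (𝓝 0) := by
    have := (tendsto_pow_atTop_nhds_zero_of_lt_one hx0.le hx1).mul_const (2 * C)
    simpa using this
  have hzero : |D u| ≤ 0 := ge_of_tendsto hlim (Filter.Eventually.of_forall fun n => hiter n u)
  have : D u = 0 := abs_eq_zero.mp (le_antisymm hzero (abs_nonneg _))
  simp only [hD] at this
  linarith

lemma SS_add (hx0 : 0 < x) (hx2 : x ≤ 1 / 2) (u n : ℕ) : SS x u = SS x (u + n) := by
  induction n with
  | zero => rfl
  | succ n ih => rw [ih, SS_succ hx0 hx2 (u + n)]; ring_nf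

lemma SS_sub_bound (hx0 : 0 < x) (hx2 : x ≤ 1 / 2) (v : ℕ) :
    |SS x v - (Qp x v)⁻¹| ≤ x ^ v * ((cst x * cst x)⁻¹ * x * (1 - x)⁻¹) := by
  have hx1 : x < 1 := lt_of_le_of_lt hx2 (by norm_num)
  have haa0 : aa x v 0 = (Qp x v)⁻¹ := by
    simp [aa, Qp_zero]
  have hsplit : SS x v = aa x v 0 + ∑' r, aa x v (r + 1) :=
    Summable.tsum_eq_zero_add (summable_aa hx0 hx2 v)
  have hs1 : Summable (fun r : ℕ => aa x v (r + 1)) :=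
    (summable_nat_add_iff 1).mpr (summable_aa hx0 hx2 v)
  have hbound : ∀ r : ℕ, aa x v (r + 1) ≤ (cst x * cst x)⁻¹ * x ^ (v + (r + 1)) := by
    intro r
    apply aa_le hx0 hx2 v (r + 1) (v + (r + 1))
    calc v + (r + 1) = (r + 1) + v := by omega
      _ ≤ (r + 1) * ((r + 1) + v) := Nat.le_mul_of_pos_left _ (by omega)
  have hg : Summable (fun r : ℕ => (cst x * cst x)⁻¹ * x ^ (v + (r + 1))) := by
    have : Summable (fun r : ℕ => ((cst x * cst x)⁻¹ * x ^ (v + 1)) * x ^ r) :=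
      (summable_geometric_of_lt_one hx0.le hx1).mul_left _
    apply this.congr
    intro r
    rw [mul_assoc, ← pow_add, show v + 1 + r = v + (r + 1) from by omega]
  have htail_le : ∑' r, aa x v (r + 1) ≤ x ^ v * ((cst x * cst x)⁻¹ * x * (1 - x)⁻¹) := by
    calc ∑' r, aa x v (r + 1) ≤ ∑' r : ℕ, (cst x * cst x)⁻¹ * x ^ (v + (r + 1)) :=
          Summable.tsum_le_tsum hbound hs1 hg
      _ = ((cst x * cst x)⁻¹ * x ^ (v + 1)) * ∑' r : ℕ, x ^ r := by
          rw [← tsum_mul_left]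
          apply tsum_congr
          intro r
          rw [mul_assoc, ← pow_add, show v + 1 + r = v + (r + 1) from by omega]
      _ = x ^ v * ((cst x * cst x)⁻¹ * x * (1 - x)⁻¹) := by
          rw [tsum_geometric_of_lt_one hx0.le hx1, pow_add]
          ring
  have htail_nonneg : 0 ≤ ∑' r, aa x v (r + 1) :=
    tsum_nonneg fun r => aa_nonneg hx0 hx1 v (r + 1)
  rw [hsplit, haa0]
  rw [abs_of_nonneg (by linarith)]
  linarith

lemma SS_eq (hx0 : 0 < x) (hx2 : x ≤ 1 / 2) (u : ℕ) : SS x u = (Qinf x)⁻¹ := by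
  have hx1 : x < 1 := lt_of_le_of_lt hx2 (by norm_num)
  have hQinf := Qinf_pos hx0 hx2
  have htSS : Tendsto (fun v : ℕ => SS x v) atTop (𝓝 ((Qinf x)⁻¹)) := by
    have h1 : Tendsto (fun v : ℕ => SS x v - (Qp x v)⁻¹) atTop (𝓝 0) := by
      apply squeeze_zero_norm (fun v => SS_sub_bound hx0 hx2 v)
      have := (tendsto_pow_atTop_nhds_zero_of_lt_one hx0.le hx1).mul_const
        ((cst x * cst x)⁻¹ * x * (1 - x)⁻¹)
      simpa using this
    have h2 : Tendsto (fun v : ℕ => (Qp x v)⁻¹) atTop (𝓝 ((Qinf x)⁻¹)) :=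
      (tendsto_Qp hx0 hx1).inv₀ hQinf.ne'
    have := h1.add h2
    simpa using this
  have h3 : Tendsto (fun n : ℕ => SS x (u + n)) atTop (𝓝 ((Qinf x)⁻¹)) := by
    have := htSS.comp (tendsto_add_atTop_nat u)
    simpa [Function.comp_def, Nat.add_comm] using this
  have h4 : Tendsto (fun n : ℕ => SS x (u + n)) atTop (𝓝 (SS x u)) := by
    have : (fun n : ℕ => SS x (u + n)) = fun _ => SS x u := by
      funext n
      exact (SS_add hx0 hx2 u n).symm
    rw [this]
    exact tendsto_const_nhds
  exact tendsto_nhds_unique h4 h3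

end CLAux

open CLAux

theorem tsum_cohenLenstraAlpha (p : ℕ) (hp : p.Prime) (u : ℕ) :
    ∑' r : ℕ, cohenLenstraAlpha p u r = 1 := by
  have hp2 : 2 ≤ p := hp.two_le
  have hpR : (2:ℝ) ≤ (p : ℝ) := by exact_mod_cast hp2
  set x : ℝ := ((p : ℝ))⁻¹ with hxdef
  have hx0 : 0 < x := by rw [hxdef]; exact inv_pos.mpr (by linarith)
  have hx2 : x ≤ 1 / 2 := by
    rw [hxdef, show (1:ℝ)/2 = (2:ℝ)⁻¹ from by norm_num]
    exact inv_anti₀ (by norm_num) hpR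
  have hx1 : x < 1 := lt_of_le_of_lt hx2 (by norm_num)
  have hQinf := Qinf_pos hx0 hx2
  have halpha : ∀ r, cohenLenstraAlpha p u r = Qinf x * aa x u r := by
    intro r
    rw [cohenLenstraAlpha, ← hxdef, tprod_tail hx0 hx1 r]
    have hppow : (p:ℝ) ^ (r * (u + r)) = (x ^ (r * (r + u)))⁻¹ := by
      rw [hxdef, ← inv_pow, inv_inv, Nat.add_comm u r]
    rw [hppow, show (∏ i ∈ Finset.range (r + u), (1 - x ^ (i + 1))) = Qp x (r + u) from rfl]
    have hQr := (Qp_pos hx0 hx1 r).ne'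
    have hQru := (Qp_pos hx0 hx1 (r + u)).ne'
    have hQi := hQinf.ne'
    have hxp : x ^ (r * (r + u)) ≠ 0 := by positivity
    simp only [aa]
    field_simp
  calc ∑' r : ℕ, cohenLenstraAlpha p u r = ∑' r : ℕ, Qinf x * aa x u r := tsum_congr halpha
    _ = Qinf x * SS x u := by simp only [SS, tsum_mul_left]
    _ = Qinf x * (Qinf x)⁻¹ := by rw [SS_eq hx0 hx2 u]
    _ = 1 := mul_inv_cancel₀ hQinf.ne'
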